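/- Let p be a power vector with all coordinates nonnegative and p_k > 0, and let j ≠ k. Then the second mixed partial derivative ∂²u_k/∂p_j∂p_k evaluated at p is nonnegative if and only if γ_k(p)·p_k ≥ p_a (equivalently, the SINR of FU k is at least p_a/p_k). -/

import Mathlib

open Real Finset

/-- SINR of FU `k`. -/
noncomputable def sinr {K : ℕ} (hff : Fin K → Fin K → ℝ) (h0f N : Fin K → ℝ)
    (p0 : ℝ) (k : Fin K) (p : Fin K → ℝ) : ℝ :=
  hff k k * p k / (N k + h0f k * p0 + ∑ j ∈ Finset.univ.erase k, hff j k * p j)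

/-- Net payoff of FU `k`. -/
noncomputable def payoff {K : ℕ} (W pa p0 : ℝ) (hff : Fin K → Fin K → ℝ)
    (h0f hf0 N lam : Fin K → ℝ) (k : Fin K) (p : Fin K → ℝ) : ℝ :=
  W * Real.log (1 + sinr hff h0f N p0 k p) / (p k + pa) - lam k * hf0 k * p k

/-- The mixed second partial derivative `∂²u_k/∂p_j∂p_k` at `p` is nonnegative
iff `γ_k(p)·p_k ≥ p_a`. -/
theorem mixed_partial_nonneg_iff {K : ℕ} (hK : 1 ≤ K)
    (W pa p0 : ℝ) (hW : 0 < W) (hpa : 0 < pa) (hp0 : 0 ≤ p0)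
    (hff : Fin K → Fin K → ℝ) (h0f hf0 N lam pmax : Fin K → ℝ)
    (hhff : ∀ i j, 0 < hff i j) (hh0f : ∀ i, 0 < h0f i) (hhf0 : ∀ i, 0 < hf0 i)
    (hN : ∀ i, 0 < N i) (hlam : ∀ i, 0 ≤ lam i) (hpmax : ∀ i, 0 < pmax i)
    (k j : Fin K) (hjk : j ≠ k)
    (p : Fin K → ℝ) (hp : ∀ i, 0 ≤ p i) (hpk : 0 < p k) :
    0 ≤ deriv (fun x => deriv
        (fun y => payoff W pa p0 hff h0f hf0 N lam k
          (Function.update (Function.update p j x) k y)) (p k)) (p j) ↔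
      pa ≤ sinr hff h0f N p0 k p * p k := by
  classical
  set a := hff k k with ha_def
  set b := hff j k with hb_def
  set lmb := lam k * hf0 k with hlmb_def
  set S := ∑ i ∈ (Finset.univ.erase k).erase j, hff i k * p i with hS_def
  set C := N k + h0f k * p0 + S with hC_def
  have ha : 0 < a := hhff k k
  have hb : 0 < b := hhff j k
  have hS : 0 ≤ S := Finset.sum_nonneg fun i _ => mul_nonneg (hhff i k).le (hp i)
  have hC : 0 < C := by
    have h1 : 0 ≤ h0f k * p0 := mul_nonneg (hh0f k).le hp0
    have h2 := hN k
    rw [hC_def]; linarith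
  have hjmem : j ∈ Finset.univ.erase k := Finset.mem_erase.mpr ⟨hjk, Finset.mem_univ j⟩
  have hsum : ∀ x y : ℝ, ∑ i ∈ Finset.univ.erase k,
      hff i k * Function.update (Function.update p j x) k y i = b * x + S := by
    intro x y
    rw [← Finset.add_sum_erase _ _ hjmem]
    congr 1
    · rw [Function.update_of_ne hjk, Function.update_self]
    · apply Finset.sum_congr rfl
      intro i hi
      simp only [Finset.mem_erase, Finset.mem_univ] at hi
      rw [Function.update_of_ne hi.2.1, Function.update_of_ne hi.1]
  have hsum_p : ∑ i ∈ Finset.univ.erase k, hff i k * p i = b * p j + S := by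
    rw [← Finset.add_sum_erase _ _ hjmem]
  have hpayoff : ∀ x y : ℝ,
      payoff W pa p0 hff h0f hf0 N lam k (Function.update (Function.update p j x) k y)
        = W * Real.log (1 + a * y / (C + b * x)) / (y + pa) - lmb * y := by
    intro x y
    simp only [payoff, sinr, Function.update_self, hsum x y]
    rw [show N k + h0f k * p0 + (b * x + S) = C + b * x from by rw [hC_def]; ring]
  have hpk_pa : (0:ℝ) < p k + pa := by linarith
  have hDform : ∀ x : ℝ, 0 < C + b * x →
      HasDerivAt (fun y => W * Real.log (1 + a * y / (C + b * x)) / (y + pa) - lmb * y)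
        ((W * (a * (p k + pa) / ((C + b * x) + a * p k))
          - W * Real.log (1 + a * p k / (C + b * x))) / (p k + pa) ^ 2 - lmb) (p k) := by
    intro x hx
    have hxne : (C + b * x) ≠ 0 := ne_of_gt hx
    have hpos : 0 < 1 + a * p k / (C + b * x) := by positivity
    have h1 : HasDerivAt (fun y : ℝ => 1 + a * y / (C + b * x)) (a / (C + b * x)) (p k) := by
      simpa using (((hasDerivAt_id (p k)).const_mul a).div_const (C + b * x)).const_add 1
    have h3 : HasDerivAt (fun y : ℝ => W * Real.log (1 + a * y / (C + b * x)))
        (W * ((a / (C + b * x)) / (1 + a * p k / (C + b * x)))) (p k) :=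
      (h1.log (ne_of_gt hpos)).const_mul W
    have h5 : HasDerivAt (fun y : ℝ => y + pa) 1 (p k) := (hasDerivAt_id _).add_const pa
    have h6 := h3.div h5 (ne_of_gt hpk_pa)
    have h7 : HasDerivAt (fun y : ℝ => lmb * y) lmb (p k) := by
      simpa using (hasDerivAt_id (p k)).const_mul lmb
    have h8 := h6.sub h7
    refine h8.congr_deriv ?_
    have hden1 : (C + b * x) + a * p k ≠ 0 := by positivity
    have hfrac : a / (C + b * x) / (1 + a * p k / (C + b * x)) = a / (C + b * x + a * p k) := by
      rw [div_div, mul_add, mul_one, mul_div_cancel₀ _ hxne]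
    rw [hfrac]
    ring
  have hIpj : 0 < C + b * p j := by
    have := mul_nonneg hb.le (hp j); linarith
  have hEv : ∀ᶠ x in nhds (p j), 0 < C + b * x := by
    have hcont : ContinuousAt (fun x : ℝ => C + b * x) (p j) := by fun_prop
    exact hcont.eventually_mem (lt_mem_nhds hIpj) |>.mono (fun x hx => hx)
  have hEvEq : (fun x => deriv
      (fun y => payoff W pa p0 hff h0f hf0 N lam k
        (Function.update (Function.update p j x) k y)) (p k))
      =ᶠ[nhds (p j)] fun x =>
        (W * (a * (p k + pa) / ((C + b * x) + a * p k))
          - W * Real.log (1 + a * p k / (C + b * x))) / (p k + pa) ^ 2 - lmb := by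
    filter_upwards [hEv] with x hx
    have hfe : (fun y => payoff W pa p0 hff h0f hf0 N lam k
        (Function.update (Function.update p j x) k y))
        = fun y => W * Real.log (1 + a * y / (C + b * x)) / (y + pa) - lmb * y :=
      funext (hpayoff x)
    rw [hfe, (hDform x hx).deriv]
  rw [hEvEq.deriv_eq]
  have hden1 : 0 < (C + b * p j) + a * p k := by
    have := mul_pos ha hpk; linarith
  have hxD : HasDerivAt (fun x : ℝ => C + b * x) b (p j) := by
    simpa using ((hasDerivAt_id (p j)).const_mul b).const_add C
  have hA : HasDerivAt (fun x : ℝ => (C + b * x) + a * p k) b (p j) := hxD.add_const _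
  have hB : HasDerivAt (fun x : ℝ => a * (p k + pa) / ((C + b * x) + a * p k))
      ((0 * ((C + b * p j) + a * p k) - a * (p k + pa) * b) / ((C + b * p j) + a * p k) ^ 2)
      (p j) := (hasDerivAt_const _ _).div hA (ne_of_gt hden1)
  have hC2 : HasDerivAt (fun x : ℝ => a * p k / (C + b * x))
      ((0 * (C + b * p j) - a * p k * b) / (C + b * p j) ^ 2) (p j) :=
    (hasDerivAt_const _ _).div hxD (ne_of_gt hIpj)
  have hlogpos : 0 < 1 + a * p k / (C + b * p j) := by positivity
  have hL : HasDerivAt (fun x : ℝ => Real.log (1 + a * p k / (C + b * x)))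
      (((0 * (C + b * p j) - a * p k * b) / (C + b * p j) ^ 2)
        / (1 + a * p k / (C + b * p j))) (p j) :=
    (hC2.const_add 1).log (ne_of_gt hlogpos)
  have hDfull : HasDerivAt (fun x : ℝ => (W * (a * (p k + pa) / ((C + b * x) + a * p k)) - W * Real.log (1 + a * p k / (C + b * x))) / (p k + pa) ^ 2 - lmb) _ (p j) := (((hB.const_mul W).sub (hL.const_mul W)).div_const ((p k + pa) ^ 2)).sub_const lmb
  rw [hDfull.deriv]
  have hsinr : sinr hff h0f N p0 k p = a * p k / (C + b * p j) := by
    rw [sinr, hsum_p,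
      show N k + h0f k * p0 + (b * p j + S) = C + b * p j from by rw [hC_def]; ring]
  have hEeq : (W * ((0 * ((C + b * p j) + a * p k) - a * (p k + pa) * b)
        / ((C + b * p j) + a * p k) ^ 2)
      - W * ((0 * (C + b * p j) - a * p k * b) / (C + b * p j) ^ 2
        / (1 + a * p k / (C + b * p j)))) / (p k + pa) ^ 2
      = (W * b * a / ((p k + pa) ^ 2 * (C + b * p j) * ((C + b * p j) + a * p k) ^ 2))
          * (a * p k ^ 2 - pa * (C + b * p j)) := by
    rw [show (1 + a * p k / (C + b * p j)) = ((C + b * p j) + a * p k) / (C + b * p j) from by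
      field_simp]
    field_simp
    ring
  rw [hEeq, hsinr]
  have hM : 0 < W * b * a / ((p k + pa) ^ 2 * (C + b * p j) * ((C + b * p j) + a * p k) ^ 2) := by
    positivity
  rw [mul_nonneg_iff_of_pos_left hM]
  rw [div_mul_eq_mul_div, le_div_iff₀ hIpj]
  have hsq : p k ^ 2 = p k * p k := pow_two (p k)
  constructor
  · intro h; linarith [hsq ▸ h]
  · intro h; rw [hsq]; linarith
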